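/- Let J ≥ 1 and let K ⊂ X = {0,…,J}^{ℤ₋} be a subshift. There exists a strict g-function for K (that is, a continuous g-function g on X such that K is g-invariant and g(ξ) > 0 for every ξ ∈ K) if and only if K is a subshift of finite type. -/

import Mathlib

open Set Topology

def shiftX {J : ℕ} (ξ : ℕ → Fin (J+1)) : ℕ → Fin (J+1) := fun n => ξ (n+1)

def consX {J : ℕ} (a : Fin (J+1)) (ξ : ℕ → Fin (J+1)) : ℕ → Fin (J+1) :=
  fun n => match n with
  | 0 => a
  | m+1 => ξ m

def starX {J : ℕ} (j : Fin (J+1)) (ξ : ℕ → Fin (J+1)) : ℕ → Fin (J+1) :=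
  fun n => match n with
  | 0 => ξ 0 + j
  | m+1 => ξ (m+1)

/-- The set of exit points of `E`: points outside `E` whose shift lies in `E`. -/
def exitX {J : ℕ} (E : Set (ℕ → Fin (J+1))) : Set (ℕ → Fin (J+1)) :=
  {ξ | ξ ∉ E ∧ shiftX ξ ∈ E}

/-- A subshift: a nonempty, closed, proper, shift-invariant subset. -/
def IsSubshift {J : ℕ} (K : Set (ℕ → Fin (J+1))) : Prop :=
  K.Nonempty ∧ IsClosed K ∧ K ≠ Set.univ ∧ K = shiftX '' K

/-- The word `(w₁,…,w_m)` occurs in `ξ` if for some `i ≥ 0` the consecutive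
coordinates `(ξ(i+m−1),…,ξ(i))` equal `(w₁,…,w_m)`. -/
def OccursX {J : ℕ} (w : List (Fin (J+1))) (ξ : ℕ → Fin (J+1)) : Prop :=
  ∃ i : ℕ, ∀ k, k < w.length → ξ (i + k) = w.reverse.getD k 0

/-- A subshift of finite type: defined by a finite nonempty set of forbidden words. -/
def IsFiniteType {J : ℕ} (K : Set (ℕ → Fin (J+1))) : Prop :=
  ∃ F : Finset (List (Fin (J+1))), F.Nonempty ∧ K = {ξ | ∀ w ∈ F, ¬ OccursX w ξ}



section GHelpers

variable {J : ℕ}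

lemma shift_iterate (ξ : ℕ → Fin (J+1)) (i n : ℕ) : (shiftX^[i] ξ) n = ξ (n + i) := by
  induction i generalizing ξ n with
  | zero => rfl
  | succ i ih =>
    rw [Function.iterate_succ_apply, ih]
    rfl

def cylX (N : ℕ) (η : ℕ → Fin (J+1)) : Set (ℕ → Fin (J+1)) := {ξ | ∀ k < N, ξ k = η k}

lemma isOpen_cylX (N : ℕ) (η : ℕ → Fin (J+1)) : IsOpen (cylX N η) := by
  have : cylX N η = ⋂ k ∈ Finset.range N, (fun ξ : ℕ → Fin (J+1) => ξ k) ⁻¹' {η k} := by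
    ext ξ; simp [cylX]
  rw [this]
  exact isOpen_biInter_finset fun k _ =>
    (isOpen_discrete _).preimage (continuous_apply k)

lemma cylX_mem_nhds (N : ℕ) (η : ℕ → Fin (J+1)) : cylX N η ∈ 𝓝 η :=
  (isOpen_cylX N η).mem_nhds (fun _ _ => rfl)

lemma exists_cylX_subset {η : ℕ → Fin (J+1)} {s : Set (ℕ → Fin (J+1))} (hs : s ∈ 𝓝 η) :
    ∃ N, cylX N η ⊆ s := by
  rw [nhds_pi, Filter.mem_pi] at hs
  obtain ⟨I, hI, t, ht, hsub⟩ := hs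
  obtain ⟨b, hb⟩ := hI.bddAbove
  refine ⟨b + 1, fun ξ hξ => hsub ?_⟩
  intro i hi
  have hti := ht i
  rw [nhds_discrete, Filter.mem_pure] at hti
  have : ξ i = η i := hξ i (Nat.lt_succ_of_le (hb hi))
  rw [this]; exact hti

lemma g_to_ft (K : Set (ℕ → Fin (J+1))) (hK : IsSubshift K)
    (g : (ℕ → Fin (J+1)) → ℝ) (hgc : Continuous g)
    (hgexit : ∀ ξ ∈ exitX K, g ξ = 0)
    (hgpos : ∀ ξ ∈ K, 0 < g ξ) : IsFiniteType K := by
  classical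
  obtain ⟨hKne, hKcl, hKproper, hKs⟩ := hK
  have hfwd : ∀ ξ ∈ K, shiftX ξ ∈ K := fun ξ h => hKs ▸ Set.mem_image_of_mem _ h
  have hfwditer : ∀ ξ ∈ K, ∀ i, shiftX^[i] ξ ∈ K := by
    intro ξ h i
    induction i with
    | zero => exact h
    | succ i ih => rw [Function.iterate_succ_apply']; exact hfwd _ ih
  -- Step 1: compactness gives uniform N₁
  have hKcomp : IsCompact K := hKcl.isCompact
  have hcyl : ∀ η ∈ K, ∃ n, cylX n η ⊆ {ξ | 0 < g ξ} :=
    fun η hη => exists_cylX_subset ((hgc.isOpen_preimage _ isOpen_Ioi).mem_nhds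
      (by exact hgpos η hη))
  choose! n hn using hcyl
  obtain ⟨t, htK, htcov⟩ := hKcomp.elim_nhds_subcover (fun η => cylX (n η) η)
    (fun η hη => by
      have h1 : cylX (n η) η ∈ 𝓝 η := cylX_mem_nhds _ _
      exact h1)
  set N₁ := t.sup n with hN₁
  have hstep1 : ∀ η ∈ K, ∀ ξ : ℕ → Fin (J+1), (∀ k < N₁, ξ k = η k) → 0 < g ξ := by
    intro η hη ξ hag
    obtain ⟨η', hη't, hηc⟩ := Set.mem_iUnion₂.mp (htcov hη)
    have hle : n η' ≤ N₁ := Finset.le_sup hη't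
    have : ξ ∈ cylX (n η') η' := fun k hk => (hag k (lt_of_lt_of_le hk hle)).trans (hηc k hk)
    exact hn η' (htK η' hη't) this
  -- Step 2: a forbidden cylinder
  obtain ⟨ξ₀, hξ₀⟩ : ∃ ξ₀, ξ₀ ∉ K := by
    by_contra h
    push_neg at h
    exact hKproper (Set.eq_univ_of_forall h)
  obtain ⟨n₀, hn₀⟩ := exists_cylX_subset (hKcl.isOpen_compl.mem_nhds hξ₀)
  set N := max N₁ n₀ with hNdef
  have hstep1' : ∀ η ∈ K, ∀ ξ : ℕ → Fin (J+1), (∀ k < N, ξ k = η k) → 0 < g ξ :=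
    fun η hη ξ hag => hstep1 η hη ξ (fun k hk => hag k (lt_of_lt_of_le hk (le_max_left _ _)))
  -- key no-exit lemma
  have hkey : ∀ ξ : ℕ → Fin (J+1), shiftX ξ ∈ K →
      (∃ η ∈ K, ∀ k < N, ξ k = η k) → ξ ∈ K := by
    rintro ξ hsξ ⟨η, hη, hag⟩
    by_contra hξ
    have h0 : g ξ = 0 := hgexit ξ ⟨hξ, hsξ⟩
    have := hstep1' η hη ξ hag
    linarith
  -- Good
  have hmain : ∀ ξ : ℕ → Fin (J+1),
      (∀ i, ∃ η ∈ K, ∀ k < N, ξ (i + k) = η k) → ξ ∈ K := by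
    intro ξ hGood
    rw [← hKcl.closure_eq]
    rw [mem_closure_iff_nhds]
    intro s hs
    obtain ⟨M, hM⟩ := exists_cylX_subset hs
    obtain ⟨η, hη, hηeq⟩ := hGood M
    set ζ : ℕ → Fin (J+1) := fun m => if m < M then ξ m else η (m - M) with hζ
    have hζK : ∀ j ≤ M, shiftX^[M - j] ζ ∈ K := by
      intro j
      induction j with
      | zero =>
        intro _
        have : shiftX^[M - 0] ζ = η := by
          funext m
          rw [shift_iterate]
          simp only [hζ, Nat.sub_zero]
          rw [if_neg (by omega)]
          congr 1
          omega
        rw [this]; exact hη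
      | succ j ih =>
        intro hjM
        have hih := ih (by omega)
        set i := M - (j + 1) with hi
        have hilt : i < M := by omega
        have hsh : shiftX (shiftX^[i] ζ) = shiftX^[M - j] ζ := by
          rw [show M - j = i + 1 by omega, Function.iterate_succ_apply']
        obtain ⟨η', hη', hag'⟩ := hGood i
        refine hkey _ (hsh ▸ hih) ⟨η', hη', fun k hk => ?_⟩
        rw [shift_iterate]
        have : ζ (k + i) = ξ (k + i) := by
          by_cases hkm : k + i < M
          · simp only [hζ, if_pos hkm]
          · simp only [hζ, if_neg hkm]
            rw [← hηeq (k + i - M) (by omega)]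
            congr 1
            omega
        rw [this, show k + i = i + k by omega]
        exact hag' k hk
    have hζmem : ζ ∈ K := by
      have := hζK M le_rfl
      simpa using this
    refine ⟨ζ, hM (fun k hk => ?_), hζmem⟩
    simp only [hζ, if_pos hk]
  -- the finite set F
  set F : Finset (List (Fin (J+1))) :=
    (Finset.univ.filter fun f : Fin N → Fin (J+1) =>
      ¬ ∃ η ∈ K, ∀ k : Fin N, η (k : ℕ) = f k).image
      (fun f => (List.ofFn f).reverse) with hF
  have hgetD : ∀ (f : Fin N → Fin (J+1)) (k : ℕ) (hk : k < N),
      ((List.ofFn f).reverse).reverse.getD k 0 = f ⟨k, hk⟩ := by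
    intro f k hk
    rw [List.reverse_reverse, List.getD_eq_getElem _ _ (by simpa using hk)]
    simp
  have hlen : ∀ f : Fin N → Fin (J+1), ((List.ofFn f).reverse).length = N := by
    intro f; simp
  refine ⟨F, ?_, ?_⟩
  · -- nonempty
    refine ⟨(List.ofFn fun k : Fin N => ξ₀ (k : ℕ)).reverse, ?_⟩
    rw [hF, Finset.mem_image]
    refine ⟨_, Finset.mem_filter.mpr ⟨Finset.mem_univ _, ?_⟩, rfl⟩
    rintro ⟨η, hη, hηeq⟩
    refine hn₀ (fun k hk => ?_) hη
    exact hηeq ⟨k, lt_of_lt_of_le hk (le_max_right _ _)⟩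
  · ext ξ
    constructor
    · intro hξ w hw
      rw [hF, Finset.mem_image] at hw
      obtain ⟨f, hf, rfl⟩ := hw
      have hbad := (Finset.mem_filter.mp hf).2
      rintro ⟨i, hocc⟩
      refine hbad ⟨shiftX^[i] ξ, hfwditer ξ hξ i, fun k => ?_⟩
      rw [shift_iterate]
      have := hocc (k : ℕ) (by rw [hlen]; exact k.isLt)
      rw [hgetD f (k : ℕ) k.isLt] at this
      rw [show (k : ℕ) + i = i + (k : ℕ) by omega, this]
    · intro hξ
      apply hmain
      intro i
      set f : Fin N → Fin (J+1) := fun k => ξ (i + (k : ℕ)) with hfd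
      by_cases hgood : ∃ η ∈ K, ∀ k : Fin N, η (k : ℕ) = f k
      · obtain ⟨η, hη, hηeq⟩ := hgood
        exact ⟨η, hη, fun k hk => (hηeq ⟨k, hk⟩).symm⟩
      · exfalso
        have hwF : (List.ofFn f).reverse ∈ F := by
          rw [hF, Finset.mem_image]
          exact ⟨f, Finset.mem_filter.mpr ⟨Finset.mem_univ _, hgood⟩, rfl⟩
        refine hξ _ hwF ⟨i, fun k hk => ?_⟩
        rw [hlen] at hk
        rw [hgetD f k hk]

lemma continuous_of_localX (N : ℕ) (g : (ℕ → Fin (J+1)) → ℝ)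
    (h : ∀ ξ η, (∀ k < N, ξ k = η k) → g ξ = g η) : Continuous g := by
  have hg : g = (fun v : Fin N → Fin (J+1) =>
      g (fun n => if hn : n < N then v ⟨n, hn⟩ else 0)) ∘ (fun ξ (k : Fin N) => ξ k) := by
    funext ξ
    exact (h _ _ (fun k hk => by simp [hk])).symm
  rw [hg]
  exact continuous_of_discreteTopology.comp (continuous_pi fun k : Fin N => continuous_apply (k : ℕ))

lemma shift_consX (a : Fin (J+1)) (ξ : ℕ → Fin (J+1)) : shiftX (consX a ξ) = ξ := rfl

lemma consX_head_tail (η : ℕ → Fin (J+1)) : consX (η 0) (shiftX η) = η := by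
  funext n; cases n <;> rfl

lemma ft_to_g (K : Set (ℕ → Fin (J+1))) (hKs : K = shiftX '' K)
    (F : Finset (List (Fin (J+1))))
    (hFK : K = {ξ | ∀ w ∈ F, ¬ OccursX w ξ}) :
    ∃ g : (ℕ → Fin (J+1)) → ℝ, Continuous g ∧ (∀ ξ, 0 ≤ g ξ) ∧
        (∀ ξ, ∑ a : Fin (J+1), g (consX a ξ) = 1) ∧
        (∀ ξ ∈ exitX K, g ξ = 0) ∧
        (∀ ξ ∈ K, 0 < g ξ) := by
  classical
  set N := F.sup List.length with hN
  set B : (ℕ → Fin (J+1)) → Prop :=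
    fun ξ => ∃ w ∈ F, ∀ k < w.length, ξ k = w.reverse.getD k 0 with hB
  set c : (ℕ → Fin (J+1)) → ℕ :=
    fun ξ => (Finset.univ.filter fun a : Fin (J+1) => ¬ B (consX a ξ)).card with hc
  -- locality of B
  have hBloc : ∀ ξ ξ' : ℕ → Fin (J+1), (∀ k < N, ξ k = ξ' k) → (B ξ ↔ B ξ') := by
    have key : ∀ ξ ξ' : ℕ → Fin (J+1), (∀ k < N, ξ k = ξ' k) → B ξ → B ξ' := by
      rintro ξ ξ' hag ⟨w, hw, hocc⟩
      refine ⟨w, hw, fun k hk => ?_⟩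
      rw [← hag k (lt_of_lt_of_le hk (Finset.le_sup hw))]
      exact hocc k hk
    exact fun ξ ξ' hag => ⟨key ξ ξ' hag, key ξ' ξ (fun k hk => (hag k hk).symm)⟩
  -- B fails on K, holds on exit
  have hBK : ∀ η ∈ K, ¬ B η := by
    intro η hη hBη
    obtain ⟨w, hw, hocc⟩ := hBη
    exact (hFK ▸ hη) w hw ⟨0, fun k hk => by simpa using hocc k hk⟩
  have hBexit : ∀ η ∈ exitX K, B η := by
    rintro η ⟨hη, hsη⟩
    have : ∃ w ∈ F, OccursX w η := by
      by_contra h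
      push_neg at h
      exact hη (hFK ▸ (fun w hw => h w hw))
    obtain ⟨w, hw, i, hocc⟩ := this
    cases i with
    | zero => exact ⟨w, hw, fun k hk => by simpa using hocc k hk⟩
    | succ i' =>
      exfalso
      refine (hFK ▸ hsη) w hw ⟨i', fun k hk => ?_⟩
      have := hocc k hk
      show η (i' + k + 1) = _
      rw [show i' + k + 1 = i' + 1 + k by omega]
      exact this
  have hcne : ∀ η : ℕ → Fin (J+1), shiftX η ∈ K → c (shiftX η) ≠ 0 := by
    intro η hsη
    obtain ⟨ζ, hζ, hζs⟩ := (hKs ▸ hsη : shiftX η ∈ shiftX '' K)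
    have : ¬ B (consX (ζ 0) (shiftX η)) := by
      rw [← hζs, consX_head_tail]
      exact hBK ζ hζ
    simp only [hc, ← Finset.card_pos]
    exact Finset.card_pos.mpr ⟨ζ 0, Finset.mem_filter.mpr ⟨Finset.mem_univ _, this⟩⟩ |>.ne'
  refine ⟨fun η => if c (shiftX η) = 0 then (1:ℝ)/(J+1)
      else if B η then 0 else 1/(c (shiftX η)), ?_, ?_, ?_, ?_, ?_⟩
  · -- continuity
    apply continuous_of_localX (N+1)
    intro η η' hag
    have hsh : ∀ k < N, shiftX η k = shiftX η' k := fun k hk => hag (k+1) (by omega)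
    have h1 : c (shiftX η) = c (shiftX η') := by
      simp only [hc]
      congr 1
      apply Finset.filter_congr
      intro a _
      have : B (consX a (shiftX η)) ↔ B (consX a (shiftX η')) := by
        apply hBloc
        intro k hk
        cases k with
        | zero => rfl
        | succ m => exact hsh m (by omega)
      rw [this]
    have h2 : B η ↔ B η' := hBloc _ _ (fun k hk => hag k (by omega))
    rw [h1]
    simp only [h2]
  · intro η
    dsimp only
    split_ifs <;> [exact div_nonneg zero_le_one (by positivity); exact le_rfl; exact div_nonneg zero_le_one (Nat.cast_nonneg _)]
  · intro ξ
    simp only [shift_consX]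
    by_cases h0 : c ξ = 0
    · simp only [h0, ite_true, eq_self_iff_true, if_true]
      rw [Finset.sum_const, Finset.card_univ, Fintype.card_fin, nsmul_eq_mul]
      field_simp
      norm_num
    · simp only [h0, ↓reduceIte]
      rw [Finset.sum_ite, Finset.sum_const_zero, zero_add, Finset.sum_const, nsmul_eq_mul]
      have hcc : (Finset.filter (fun a : Fin (J+1) => ¬ B (consX a ξ)) Finset.univ).card = c ξ := rfl
      rw [hcc, mul_one_div, div_self (by exact_mod_cast h0)]
  · rintro η hη
    have hb := hBexit η hη
    have hc0 := hcne η hη.2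
    simp [hc0, hb]
  · intro η hη
    have hb := hBK η hη
    have hsη : shiftX η ∈ K := by
      rw [hFK]
      rintro w hw ⟨i, hocc⟩
      refine (hFK ▸ hη) w hw ⟨i+1, fun k hk => ?_⟩
      rw [show i+1+k = i+k+1 by omega]
      exact hocc k hk
    have hc0 := hcne η hsη
    simp only [if_neg hc0, if_neg hb]
    have hcpos : 0 < c (shiftX η) := Nat.pos_of_ne_zero hc0
    rw [one_div]
    exact inv_pos.mpr (by exact_mod_cast hcpos)

end GHelpers

/-- A subshift has a strict `g`-function (a continuous `g`-function,
positive on `K`, for which `K` is invariant) iff it is of finite type. -/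
theorem subshift_has_strict_gFunction_iff_finiteType {J : ℕ} (hJ : 1 ≤ J)
    (K : Set (ℕ → Fin (J+1))) (hK : IsSubshift K) :
    (∃ g : (ℕ → Fin (J+1)) → ℝ, Continuous g ∧ (∀ ξ, 0 ≤ g ξ) ∧
        (∀ ξ, ∑ a : Fin (J+1), g (consX a ξ) = 1) ∧
        (∀ ξ ∈ exitX K, g ξ = 0) ∧
        (∀ ξ ∈ K, 0 < g ξ)) ↔
      IsFiniteType K := by
  constructor
  · rintro ⟨g, hgc, _, _, hgexit, hgpos⟩
    exact g_to_ft K hK g hgc hgexit hgpos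
  · rintro ⟨F, _, hFK⟩
    exact ft_to_g K hK.2.2.2 F hFK
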